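/- arXiv:2603.17151 — 5 statements merged into one kernel-verified Lean document; each statement's English description precedes it below -/
import Mathlib

section
/- Let μ be a probability measure on ℝ and let κ ∈ ℝ be such that μ({κ}) = 0. Then the relative put price function p(κ') = ∫ max(exp κ' − exp x, 0) dμ(x) is differentiable at κ with derivative p'(κ) = exp κ · μ((-∞, κ]); in particular the derivative of the put price recovers the implied cumulative distribution function via Ψ(κ) = exp(−κ) p'(κ). -/
open MeasureTheory Real

theorem put_price_deriv_recovers_cdf
    (μ : Measure ℝ) [IsProbabilityMeasure μ] (κ : ℝ) (hκ : μ {κ} = 0) :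
    HasDerivAt (fun κ' => ∫ x, max (Real.exp κ' - Real.exp x) 0 ∂μ)
      (Real.exp κ * (μ (Set.Iic κ)).toReal) κ ∧
    (μ (Set.Iic κ)).toReal
      = Real.exp (-κ) * deriv (fun κ' => ∫ x, max (Real.exp κ' - Real.exp x) 0 ∂μ) κ := by
  have hIio : μ (Set.Iio κ) = μ (Set.Iic κ) := by
    refine le_antisymm (measure_mono Set.Iio_subset_Iic_self) ?_
    calc μ (Set.Iic κ) ≤ μ (Set.Iio κ ∪ {κ}) := by
          refine measure_mono fun x hx => ?_
          have hx' : x ≤ κ := hx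
          rcases hx'.lt_or_eq with h | h
          · exact Or.inl h
          · exact Or.inr h
      _ ≤ μ (Set.Iio κ) + μ {κ} := measure_union_le _ _
      _ = μ (Set.Iio κ) := by rw [hκ, add_zero]
  set F' : ℝ → ℝ := Set.indicator (Set.Iio κ) (fun _ => Real.exp κ) with hF'
  have key : Integrable F' μ ∧
      HasDerivAt (fun κ' => ∫ x, max (Real.exp κ' - Real.exp x) 0 ∂μ) (∫ x, F' x ∂μ) κ := by
    apply hasDerivAt_integral_of_dominated_loc_of_lip (bound := fun _ => Real.exp (κ + 1))
      (s := Metric.ball κ 1) (Metric.ball_mem_nhds κ one_pos)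
    · filter_upwards with t
      exact (Continuous.max (continuous_const.sub Real.continuous_exp)
        continuous_const).aestronglyMeasurable
    · apply (integrable_const (Real.exp κ)).mono'
      · exact (Continuous.max (continuous_const.sub Real.continuous_exp)
          continuous_const).aestronglyMeasurable
      · filter_upwards with x
        rw [Real.norm_eq_abs, abs_of_nonneg (le_max_right _ _)]
        refine max_le ?_ (Real.exp_pos κ).le
        simp [Real.exp_pos x |>.le]
    · exact (measurable_const.indicator measurableSet_Iio).aestronglyMeasurable
    · filter_upwards with x
      rw [lipschitzOnWith_iff_dist_le_mul]
      intro s hs t ht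
      have habs : ∀ a b : ℝ, a ∈ Metric.ball κ 1 → b ∈ Metric.ball κ 1 → b ≤ a →
          max (Real.exp a - Real.exp x) 0 - max (Real.exp b - Real.exp x) 0
            ≤ Real.exp (κ + 1) * (a - b) := by
        intro a b ha hb hba
        have h1 : max (Real.exp a - Real.exp x) 0 - max (Real.exp b - Real.exp x) 0
            ≤ Real.exp a - Real.exp b := by
          rcases le_or_gt (Real.exp a - Real.exp x) 0 with h | h
          · have : max (Real.exp a - Real.exp x) 0 = 0 := max_eq_right h
            rw [this]
            simp only [sub_nonpos.mpr (le_max_right _ _), zero_sub, neg_nonpos.mpr]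
            have := Real.exp_le_exp.mpr hba
            nlinarith [le_max_right (Real.exp b - Real.exp x) 0]
          · have : max (Real.exp a - Real.exp x) 0 = Real.exp a - Real.exp x :=
              max_eq_left h.le
            rw [this]
            nlinarith [le_max_left (Real.exp b - Real.exp x) 0]
        have h2 : Real.exp a - Real.exp b ≤ Real.exp (κ + 1) * (a - b) := by
          have hab : Real.exp a - Real.exp b ≤ Real.exp a * (a - b) := by
            have h0 := Real.add_one_le_exp (b - a)
            have he : Real.exp a * Real.exp (b - a) = Real.exp b := by
              rw [← Real.exp_add]; ring_nf
            nlinarith [Real.exp_pos a,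
              mul_le_mul_of_nonneg_left h0 (Real.exp_pos a).le]
          have ha1 : a < κ + 1 := by
            have := Real.dist_eq a κ ▸ (Metric.mem_ball.mp ha)
            have := abs_lt.mp this
            linarith [this.1, this.2]
          calc Real.exp a - Real.exp b ≤ Real.exp a * (a - b) := hab
            _ ≤ Real.exp (κ + 1) * (a - b) := by
                have := (Real.exp_le_exp.mpr ha1.le)
                nlinarith [sub_nonneg.mpr hba]
        linarith
      have hC : (Real.nnabs (Real.exp (κ + 1)) : ℝ) = Real.exp (κ + 1) := by
        rw [Real.coe_nnabs, abs_of_nonneg (Real.exp_pos _).le]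
      rw [hC, Real.dist_eq, Real.dist_eq]
      have hmono : ∀ a b : ℝ, b ≤ a →
          max (Real.exp b - Real.exp x) 0 ≤ max (Real.exp a - Real.exp x) 0 :=
        fun a b hba => max_le_max (sub_le_sub_right (Real.exp_le_exp.mpr hba) _) le_rfl
      rcases le_total t s with h | h
      · rw [abs_of_nonneg (sub_nonneg.mpr (hmono s t h)),
          abs_of_nonneg (sub_nonneg.mpr h)]
        exact habs s t hs ht h
      · rw [abs_sub_comm, abs_of_nonneg (sub_nonneg.mpr (hmono t s h)),
          abs_sub_comm s t, abs_of_nonneg (sub_nonneg.mpr h)]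
        exact habs t s ht hs h
    · exact integrable_const _
    · have hne : ∀ᵐ x ∂μ, x ≠ κ := by
        have := measure_mono_null (fun x (hx : x ∈ {y | ¬ y ≠ κ}) => by
          simpa using hx) hκ
        filter_upwards [ae_iff.mpr this] with x hx using hx
      filter_upwards [hne] with x hx
      rcases lt_or_gt_of_ne hx with h | h
      · -- x < κ : near κ, max = exp t - exp x
        have heq : (fun t => max (Real.exp t - Real.exp x) 0)
            =ᶠ[nhds κ] fun t => Real.exp t - Real.exp x := by
          filter_upwards [eventually_gt_nhds h] with t ht
          rw [max_eq_left (sub_nonneg.mpr (Real.exp_le_exp.mpr ht.le))]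
        have hd : HasDerivAt (fun t => Real.exp t - Real.exp x) (Real.exp κ) κ := by
          simpa using (Real.hasDerivAt_exp κ).sub_const (Real.exp x)
        have := hd.congr_of_eventuallyEq heq
        rwa [hF', Set.indicator_of_mem (Set.mem_Iio.mpr h)]
      · -- x > κ : near κ, max = 0
        have heq : (fun t => max (Real.exp t - Real.exp x) 0)
            =ᶠ[nhds κ] fun _ => (0 : ℝ) := by
          filter_upwards [eventually_lt_nhds h] with t ht
          rw [max_eq_right (sub_nonpos.mpr (Real.exp_le_exp.mpr ht.le))]
        have hd : HasDerivAt (fun _ : ℝ => (0 : ℝ)) 0 κ := hasDerivAt_const κ 0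
        have := hd.congr_of_eventuallyEq heq
        rwa [hF', Set.indicator_of_notMem (by simp [Set.mem_Iio, not_lt.mpr h.le])]
  have hint : ∫ x, F' x ∂μ = Real.exp κ * (μ (Set.Iic κ)).toReal := by
    rw [hF', integral_indicator_const _ measurableSet_Iio, measureReal_def, hIio, smul_eq_mul, mul_comm]
  have hderiv := hint ▸ key.2
  refine ⟨hderiv, ?_⟩
  rw [hderiv.deriv, ← mul_assoc, ← Real.exp_add, neg_add_cancel, Real.exp_zero, one_mul]
end

section
/- For every fixed κ ∈ ℝ, the Black–Scholes put price ω ↦ p_BS(ω, κ) = exp κ · Φ((κ + ω²/2)/ω) − Φ((κ − ω²/2)/ω) is strictly monotone increasing on (0, ∞). -/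
open MeasureTheory Real

/-- Standard normal probability density function. -/
noncomputable def stdNormalPDF (z : ℝ) : ℝ := Real.exp (-z ^ 2 / 2) / Real.sqrt (2 * Real.pi)

/-- Standard normal cumulative distribution function. -/
noncomputable def stdNormalCDF (z : ℝ) : ℝ := ∫ u in Set.Iic z, stdNormalPDF u

lemma stdNormalPDF_continuous : Continuous stdNormalPDF := by
  unfold stdNormalPDF
  fun_prop

lemma stdNormalPDF_pos (z : ℝ) : 0 < stdNormalPDF z := by
  unfold stdNormalPDF
  positivity

lemma stdNormalPDF_integrable : Integrable stdNormalPDF := by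
  have h : Integrable fun z : ℝ => Real.exp (-(1/2) * z ^ 2) :=
    integrable_exp_neg_mul_sq (by norm_num)
  have := h.div_const (Real.sqrt (2 * Real.pi))
  convert this using 2 with z
  unfold stdNormalPDF
  ring_nf

lemma hasDerivAt_stdNormalCDF (z : ℝ) : HasDerivAt stdNormalCDF (stdNormalPDF z) z := by
  have key : ∀ z : ℝ, stdNormalCDF z = stdNormalCDF 0 + ∫ u in (0:ℝ)..z, stdNormalPDF u := by
    intro z
    have := intervalIntegral.integral_Iic_sub_Iic
      (stdNormalPDF_integrable.integrableOn (s := Set.Iic (0:ℝ)))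
      (stdNormalPDF_integrable.integrableOn (s := Set.Iic z))
    unfold stdNormalCDF
    linarith
  have h : HasDerivAt (fun z : ℝ => stdNormalCDF 0 + ∫ u in (0:ℝ)..z, stdNormalPDF u)
      (stdNormalPDF z) z :=
    ((stdNormalPDF_continuous.integral_hasStrictDerivAt 0 z).hasDerivAt).const_add _
  exact h.congr_of_eventuallyEq (Filter.Eventually.of_forall fun x => key x)

theorem blackScholes_put_strictMono_in_vol (κ : ℝ) :
    StrictMonoOn
      (fun ω => Real.exp κ * stdNormalCDF ((κ + ω ^ 2 / 2) / ω)
        - stdNormalCDF ((κ - ω ^ 2 / 2) / ω))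
      (Set.Ioi (0 : ℝ)) := by
  have hder : ∀ ω ∈ Set.Ioi (0:ℝ), HasDerivAt
      (fun ω => Real.exp κ * stdNormalCDF ((κ + ω ^ 2 / 2) / ω)
        - stdNormalCDF ((κ - ω ^ 2 / 2) / ω))
      (stdNormalPDF ((κ - ω ^ 2 / 2) / ω)) ω := by
    intro ω hω
    have hω0 : ω ≠ 0 := ne_of_gt hω
    have h1 : HasDerivAt (fun ω : ℝ => (κ + ω ^ 2 / 2) / ω) (1/2 - κ/ω^2) ω := by
      have hn : HasDerivAt (fun ω : ℝ => κ + ω ^ 2 / 2) ω ω := by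
        simpa using ((hasDerivAt_pow 2 ω).div_const 2).const_add κ
      have := hn.div (hasDerivAt_id ω) hω0
      refine this.congr_deriv ?_
      simp only [id]
      field_simp
      ring
    have h2 : HasDerivAt (fun ω : ℝ => (κ - ω ^ 2 / 2) / ω) (-(1/2) - κ/ω^2) ω := by
      have hn : HasDerivAt (fun ω : ℝ => κ - ω ^ 2 / 2) (-ω) ω := by
        simpa using ((hasDerivAt_pow 2 ω).div_const 2).const_sub κ
      have := hn.div (hasDerivAt_id ω) hω0
      refine this.congr_deriv ?_
      simp only [id]
      field_simp
      ring
    have hc1 := HasDerivAt.comp (h₂ := stdNormalCDF) ω (hasDerivAt_stdNormalCDF _) h1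
    have hc2 := HasDerivAt.comp (h₂ := stdNormalCDF) ω (hasDerivAt_stdNormalCDF _) h2
    have h := (hc1.const_mul (Real.exp κ)).sub hc2
    refine h.congr_deriv ?_
    have hident : Real.exp κ * stdNormalPDF ((κ + ω ^ 2 / 2) / ω)
        = stdNormalPDF ((κ - ω ^ 2 / 2) / ω) := by
      unfold stdNormalPDF
      rw [mul_div_assoc', ← Real.exp_add]
      congr 1
      field_simp
      ring
    rw [← hident]
    ring
  exact strictMonoOn_of_deriv_pos (convex_Ioi 0)
    (fun x hx => ((hder x (interior_subset (by simpa using hx) )).continuousAt).continuousWithinAt)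
    (fun x hx => by
      rw [(hder x (by simpa [interior_Ioi] using hx)).deriv]
      exact stdNormalPDF_pos _)
end

section
/- (Proposition 1, density correction.) Let ω : ℝ → (0, ∞) be twice differentiable and define P(κ) = exp κ · Φ(z₊(κ)) − Φ(z₋(κ)) with z_±(κ) = (κ ± ω(κ)²/2)/ω(κ). Then the implied density ψ(κ) := d/dκ [exp(−κ) P'(κ)] exists and equals ψ_BS^ω(κ) · ξ^ω(κ), where ψ_BS^ω(κ) = φ(z₊(κ))/ω(κ) is the Black–Scholes quasi-PDF and ξ^ω(κ) = (1 − (κ/ω(κ)) ω'(κ))² − (1/4)(ω(κ) ω'(κ))² + ω(κ) ω''(κ) is the correction multiplier. -/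
open MeasureTheory Real

lemma hasDerivAt_stdNormalPDF (z : ℝ) :
    HasDerivAt stdNormalPDF (-z * stdNormalPDF z) z := by
  have h1 : HasDerivAt (fun x : ℝ => -x ^ 2 / 2) (-z) z := by
    have := ((hasDerivAt_pow 2 z).neg).div_const 2
    simpa using this.congr_deriv (by push_cast; ring)
  have h2 := (h1.exp).div_const (Real.sqrt (2 * Real.pi))
  unfold stdNormalPDF
  exact h2.congr_deriv (by ring)

theorem implied_density_correction (ω ω' ω'' : ℝ → ℝ)
    (hpos : ∀ κ, 0 < ω κ)
    (hderiv : ∀ κ, HasDerivAt ω (ω' κ) κ)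
    (hderiv2 : ∀ κ, HasDerivAt ω' (ω'' κ) κ)
    (P : ℝ → ℝ)
    (hP : P = fun κ => Real.exp κ * stdNormalCDF ((κ + ω κ ^ 2 / 2) / ω κ)
      - stdNormalCDF ((κ - ω κ ^ 2 / 2) / ω κ)) :
    ∀ κ, HasDerivAt (fun k => Real.exp (-k) * deriv P k)
      ((stdNormalPDF ((κ + ω κ ^ 2 / 2) / ω κ) / ω κ)
        * ((1 - (κ / ω κ) * ω' κ) ^ 2 - (1 / 4) * (ω κ * ω' κ) ^ 2 + ω κ * ω'' κ)) κ := by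
  have hne : ∀ κ, ω κ ≠ 0 := fun κ => (hpos κ).ne'
  set u : ℝ → ℝ := fun k => (k + ω k ^ 2 / 2) / ω k with hu_def
  set v : ℝ → ℝ := fun k => (k - ω k ^ 2 / 2) / ω k with hv_def
  set u' : ℝ → ℝ := fun k =>
    ((1 + ω k * ω' k) * ω k - (k + ω k ^ 2 / 2) * ω' k) / (ω k) ^ 2 with hu'_def
  set v' : ℝ → ℝ := fun k =>
    ((1 - ω k * ω' k) * ω k - (k - ω k ^ 2 / 2) * ω' k) / (ω k) ^ 2 with hv'_def
  have hu : ∀ k, HasDerivAt u (u' k) k := by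
    intro k
    have hnum : HasDerivAt (fun x => x + ω x ^ 2 / 2) (1 + ω k * ω' k) k := by
      have := (hasDerivAt_id k).add (((hderiv k).pow 2).div_const 2)
      exact this.congr_deriv (by ring)
    exact hnum.div (hderiv k) (hne k)
  have hv : ∀ k, HasDerivAt v (v' k) k := by
    intro k
    have hnum : HasDerivAt (fun x => x - ω x ^ 2 / 2) (1 - ω k * ω' k) k := by
      have := (hasDerivAt_id k).sub (((hderiv k).pow 2).div_const 2)
      exact this.congr_deriv (by ring)
    exact hnum.div (hderiv k) (hne k)
  -- key identity: stdNormalPDF (v k) = exp k * stdNormalPDF (u k)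
  have hpdf_id : ∀ k, stdNormalPDF (v k) = Real.exp k * stdNormalPDF (u k) := by
    intro k
    unfold stdNormalPDF
    rw [mul_div_assoc', ← Real.exp_add]
    congr 1
    have h0 := hne k
    have huv : u k = v k + ω k := by
      simp only [hu_def, hv_def]; field_simp; ring
    have hvω : v k * ω k = k - ω k ^ 2 / 2 := by
      simp only [hv_def]; field_simp
    rw [Real.exp_eq_exp, huv]
    linear_combination hvω
  have hdiff : ∀ k, u' k - v' k = ω' k := by
    intro k
    simp only [hu'_def, hv'_def]
    have := hne k
    field_simp
    ring
  -- derivative of P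
  have hP' : ∀ k, HasDerivAt P
      (Real.exp k * (stdNormalCDF (u k) + stdNormalPDF (u k) * ω' k)) k := by
    intro k
    have h1 : HasDerivAt (fun x => Real.exp x * stdNormalCDF (u x))
        (Real.exp k * stdNormalCDF (u k) + Real.exp k * (stdNormalPDF (u k) * u' k)) k :=
      (Real.hasDerivAt_exp k).mul ((hasDerivAt_stdNormalCDF (u k)).comp k (hu k))
    have h2 : HasDerivAt (fun x => stdNormalCDF (v x)) (stdNormalPDF (v k) * v' k) k :=
      (hasDerivAt_stdNormalCDF (v k)).comp k (hv k)
    have h3 := h1.sub h2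
    rw [hP]
    refine h3.congr_deriv ?_
    rw [hpdf_id k]
    linear_combination (Real.exp k * stdNormalPDF (u k)) * hdiff k
  intro κ
  -- the function equals stdNormalCDF (u k) + stdNormalPDF (u k) * ω' k
  have hFeq : (fun k => Real.exp (-k) * deriv P k)
      = fun k => stdNormalCDF (u k) + stdNormalPDF (u k) * ω' k := by
    funext k
    rw [(hP' k).deriv, ← mul_assoc, ← Real.exp_add]
    simp
  rw [hFeq]
  have hG : HasDerivAt (fun k => stdNormalCDF (u k) + stdNormalPDF (u k) * ω' k)
      (stdNormalPDF (u κ) * u' κ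
        + ((-(u κ) * stdNormalPDF (u κ) * u' κ) * ω' κ + stdNormalPDF (u κ) * ω'' κ)) κ := by
    have h1 : HasDerivAt (fun k => stdNormalCDF (u k)) (stdNormalPDF (u κ) * u' κ) κ :=
      (hasDerivAt_stdNormalCDF (u κ)).comp κ (hu κ)
    have h2 : HasDerivAt (fun k => stdNormalPDF (u k)) (-(u κ) * stdNormalPDF (u κ) * u' κ) κ := by
      have := (hasDerivAt_stdNormalPDF (u κ)).comp κ (hu κ)
      exact this.congr_deriv (by ring)
    exact h1.add (h2.mul (hderiv2 κ))
  convert hG using 1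
  simp only [hu_def, hu'_def]
  have := hne κ
  field_simp
  ring
end

section
/- (Esscher tilting of the logistic-beta density.) Let α > 0, β > 0, 0 < ς < β, μ ∈ ℝ. Then for every x ∈ ℝ, exp(x) · (1/ς) φ_LB((x − μ)/ς; α, β) = exp(μ) · (B(α + ς, β − ς)/B(α, β)) · (1/ς) φ_LB((x − μ)/ς; α + ς, β − ς). In particular, if exp(μ) = B(α, β)/B(α + ς, β − ς), then the exponentially tilted density x ↦ exp(x) ψ_LB(x) coincides pointwise with the logistic-beta density with parameters (μ, ς, α + ς, β − ς). -/
open MeasureTheory Real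

/-- PDF of the standard logistic distribution. -/
noncomputable def logisticPDF (z : ℝ) : ℝ := Real.exp z / (1 + Real.exp z) ^ 2

/-- CDF of the standard logistic distribution. -/
noncomputable def logisticCDF (z : ℝ) : ℝ := Real.exp z / (1 + Real.exp z)

/-- The Beta function. -/
noncomputable def Beta (a b : ℝ) : ℝ := ∫ u in (0:ℝ)..1, u ^ (a - 1) * (1 - u) ^ (b - 1)

lemma beta_integrand_intervalIntegrable {a b : ℝ} (ha : 0 < a) (hb : 0 < b) :
    IntervalIntegrable (fun u : ℝ => u ^ (a - 1) * (1 - u) ^ (b - 1)) volume 0 1 := by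
  have h := Complex.betaIntegral_convergent (u := (a : ℂ)) (v := (b : ℂ))
    (by simpa using ha) (by simpa using hb)
  have h2 : IntervalIntegrable (fun x : ℝ =>
      ((x : ℂ) ^ ((a : ℂ) - 1) * ((1 : ℂ) - x) ^ ((b : ℂ) - 1)).re) volume 0 1 :=
    ⟨h.1.re, h.2.re⟩
  apply h2.congr
  intro x hx
  rw [Set.uIoc_of_le (by norm_num : (0:ℝ) ≤ 1)] at hx
  have hx0 : 0 < x := hx.1
  have hx1 : 0 ≤ 1 - x := by linarith [hx.2]
  have e1 : (x : ℂ) ^ ((a : ℂ) - 1) = ((x ^ (a - 1) : ℝ) : ℂ) := by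
    rw [show ((a : ℂ) - 1) = ((a - 1 : ℝ) : ℂ) by push_cast; ring,
      Complex.ofReal_cpow hx0.le]
  have e2 : ((1 : ℂ) - x) ^ ((b : ℂ) - 1) = ((((1 - x) ^ (b - 1)) : ℝ) : ℂ) := by
    rw [show ((1 : ℂ) - x) = ((1 - x : ℝ) : ℂ) by push_cast; ring,
      show ((b : ℂ) - 1) = ((b - 1 : ℝ) : ℂ) by push_cast; ring,
      Complex.ofReal_cpow hx1]
  simp [e1, e2, ← Complex.ofReal_mul]

lemma Beta_pos {a b : ℝ} (ha : 0 < a) (hb : 0 < b) : 0 < Beta a b := by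
  apply intervalIntegral.intervalIntegral_pos_of_pos_on
    (beta_integrand_intervalIntegrable ha hb)
  · intro x hx
    exact mul_pos (Real.rpow_pos_of_pos hx.1 _)
      (Real.rpow_pos_of_pos (by linarith [hx.2]) _)
  · norm_num

/-- PDF of the standard logistic-beta distribution. -/
noncomputable def logisticBetaPDF (z α β : ℝ) : ℝ :=
  logisticPDF z * logisticCDF z ^ (α - 1) * (1 - logisticCDF z) ^ (β - 1) / Beta α β

theorem logisticBeta_esscher_tilting (α β ς μ : ℝ)
    (hα : 0 < α) (hβ : 0 < β) (hς : 0 < ς) (hςβ : ς < β) :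
    (∀ x : ℝ, Real.exp x * ((1 / ς) * logisticBetaPDF ((x - μ) / ς) α β)
      = Real.exp μ * (Beta (α + ς) (β - ς) / Beta α β)
        * ((1 / ς) * logisticBetaPDF ((x - μ) / ς) (α + ς) (β - ς))) ∧
    (Real.exp μ = Beta α β / Beta (α + ς) (β - ς) →
      ∀ x : ℝ, Real.exp x * ((1 / ς) * logisticBetaPDF ((x - μ) / ς) α β)
        = (1 / ς) * logisticBetaPDF ((x - μ) / ς) (α + ς) (β - ς)) := by
  have hB : 0 < Beta α β := Beta_pos hα hβ
  have hB' : 0 < Beta (α + ς) (β - ς) := Beta_pos (by linarith) (by linarith)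
  have key : ∀ x : ℝ, Real.exp x * ((1 / ς) * logisticBetaPDF ((x - μ) / ς) α β)
      = Real.exp μ * (Beta (α + ς) (β - ς) / Beta α β)
        * ((1 / ς) * logisticBetaPDF ((x - μ) / ς) (α + ς) (β - ς)) := by
    intro x
    set z := (x - μ) / ς with hz
    have hxz : x = μ + ς * z := by linear_combination -(eq_div_iff hς.ne').mp hz
    have hex : Real.exp x = Real.exp μ * Real.exp z ^ ς := by
      rw [hxz, Real.exp_add, Real.rpow_def_of_pos (Real.exp_pos z), Real.log_exp, mul_comm z ς]
    have he : 0 < Real.exp z := Real.exp_pos z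
    have h1e : 0 < 1 + Real.exp z := by linarith
    have hΦ : 0 < logisticCDF z := div_pos he h1e
    have h1Φ : 1 - logisticCDF z = 1 / (1 + Real.exp z) := by
      rw [logisticCDF]; field_simp; ring
    have h1Φpos : 0 < 1 - logisticCDF z := by rw [h1Φ]; positivity
    have hratio : logisticCDF z / (1 - logisticCDF z) = Real.exp z := by
      rw [h1Φ, logisticCDF]; field_simp
    have hΦpow : logisticCDF z ^ (α + ς - 1)
        = logisticCDF z ^ (α - 1) * logisticCDF z ^ ς := by
      rw [← Real.rpow_add hΦ]; ring_nf
    have h1Φpow : (1 - logisticCDF z) ^ (β - ς - 1)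
        = (1 - logisticCDF z) ^ (β - 1) * (1 - logisticCDF z) ^ (-ς) := by
      rw [← Real.rpow_add h1Φpos]; ring_nf
    have hmix : logisticCDF z ^ ς * (1 - logisticCDF z) ^ (-ς) = Real.exp z ^ ς := by
      rw [← hratio, Real.div_rpow hΦ.le h1Φpos.le, Real.rpow_neg h1Φpos.le,
        div_eq_mul_inv]
    have hD : logisticPDF z * logisticCDF z ^ (α + ς - 1)
          * (1 - logisticCDF z) ^ (β - ς - 1)
        = Real.exp z ^ ς
          * (logisticPDF z * logisticCDF z ^ (α - 1) * (1 - logisticCDF z) ^ (β - 1)) := by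
      rw [hΦpow, h1Φpow]
      linear_combination (logisticPDF z * logisticCDF z ^ (α - 1)
        * (1 - logisticCDF z) ^ (β - 1)) * hmix
    rw [logisticBetaPDF, logisticBetaPDF, hex, hD]
    field_simp
  refine ⟨key, fun hμ x => ?_⟩
  rw [key x, hμ]
  field_simp
end

section
/- (Additive logistic put pricing formula.) Let α > 0, β > 0, 0 < ς < β, and let μ ∈ ℝ satisfy exp(μ) = B(α, β)/B(α + ς, β − ς) (the martingale normalization). Let X be a real random variable with density ψ_LB(x) = (1/ς) φ_LB((x − μ)/ς; α, β). Then for every κ ∈ ℝ, with z(κ) = (κ − μ)/ς, the put price satisfies ∫ max(exp κ − exp x, 0) ψ_LB(x) dx = exp κ · Φ_LB(z(κ); α, β) − Φ_LB(z(κ); α + ς, β − ς). -/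
open MeasureTheory Real Set

/-- CDF of the standard logistic-beta distribution. -/
noncomputable def logisticBetaCDF (z α β : ℝ) : ℝ :=
  (1 / Beta α β) * ∫ u in (0:ℝ)..(logisticCDF z), u ^ (α - 1) * (1 - u) ^ (β - 1)

lemma one_add_exp_pos (z : ℝ) : 0 < 1 + Real.exp z := by positivity

lemma logisticCDF_pos (z : ℝ) : 0 < logisticCDF z :=
  div_pos (Real.exp_pos z) (one_add_exp_pos z)

lemma logisticCDF_lt_one (z : ℝ) : logisticCDF z < 1 := by
  rw [logisticCDF, div_lt_one (one_add_exp_pos z)]; linarith [Real.exp_pos z]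

lemma logisticCDF_strictMono : StrictMono logisticCDF := by
  intro a b hab
  rw [logisticCDF, logisticCDF, div_lt_div_iff₀ (one_add_exp_pos a) (one_add_exp_pos b)]
  have := Real.exp_lt_exp.2 hab
  nlinarith [Real.exp_pos a, Real.exp_pos b]

lemma logisticCDF_ratio (z : ℝ) : logisticCDF z / (1 - logisticCDF z) = Real.exp z := by
  have h := one_add_exp_pos z
  rw [logisticCDF]
  field_simp
  ring

lemma hasDerivAt_logisticCDF (z : ℝ) : HasDerivAt logisticCDF (logisticPDF z) z := by
  have h : HasDerivAt (fun x : ℝ => Real.exp x / (1 + Real.exp x)) _ z := (Real.hasDerivAt_exp z).div ((hasDerivAt_const z (1:ℝ)).add (Real.hasDerivAt_exp z))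
    (ne_of_gt (one_add_exp_pos z))
  convert h using 1
  · rfl
  rw [logisticPDF]
  field_simp
  ring

lemma logistic_change_var (ς μ κ : ℝ) (hς : 0 < ς) (g : ℝ → ℝ) :
    ∫ u in Ioo 0 (logisticCDF ((κ - μ) / ς)), g u
      = ∫ x in Iio κ, ((1 / ς) * logisticPDF ((x - μ) / ς)) * g (logisticCDF ((x - μ) / ς)) := by
  have hmono : StrictMono (fun x : ℝ => logisticCDF ((x - μ) / ς)) := by
    intro a b hab
    exact logisticCDF_strictMono (by apply div_lt_div_of_pos_right (by linarith) hς)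
  have hderiv : ∀ x : ℝ, HasDerivAt (fun x : ℝ => logisticCDF ((x - μ) / ς))
      ((1 / ς) * logisticPDF ((x - μ) / ς)) x := by
    intro x
    have hin : HasDerivAt (fun x : ℝ => (x - μ) / ς) (1 / ς) x := by
      simpa using ((hasDerivAt_id x).sub_const μ).div_const ς
    have := (hasDerivAt_logisticCDF ((x - μ) / ς)).comp x hin
    simpa [mul_comm, Function.comp_def] using this
  have hpos : ∀ x : ℝ, 0 < (1 / ς) * logisticPDF ((x - μ) / ς) := by
    intro x
    have h1 : 0 < logisticPDF ((x - μ) / ς) := by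
      rw [logisticPDF]; positivity
    positivity
  have himg : (fun x : ℝ => logisticCDF ((x - μ) / ς)) '' (Iio κ)
      = Ioo 0 (logisticCDF ((κ - μ) / ς)) := by
    ext u
    constructor
    · rintro ⟨x, hx, rfl⟩
      exact ⟨logisticCDF_pos _, hmono hx⟩
    · rintro ⟨hu0, hu1⟩
      have hu1' : u < 1 := lt_trans hu1 (logisticCDF_lt_one _)
      have h1u : (0:ℝ) < 1 - u := by linarith
      have hr : (0:ℝ) < u / (1 - u) := div_pos hu0 h1u
      refine ⟨μ + ς * Real.log (u / (1 - u)), ?_, ?_⟩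
      swap
      · show logisticCDF _ = u
        have hz : (μ + ς * Real.log (u / (1 - u)) - μ) / ς = Real.log (u / (1 - u)) := by
          field_simp
          ring
        rw [hz, logisticCDF, Real.exp_log hr]
        field_simp
        ring
      · have hfx : logisticCDF ((μ + ς * Real.log (u / (1 - u)) - μ) / ς) = u := by
          have hz : (μ + ς * Real.log (u / (1 - u)) - μ) / ς = Real.log (u / (1 - u)) := by
            field_simp
            ring
          rw [hz, logisticCDF, Real.exp_log hr]
          field_simp
          ring
        have : logisticCDF ((μ + ς * Real.log (u / (1 - u)) - μ) / ς)
            < logisticCDF ((κ - μ) / ς) := by rw [hfx]; exact hu1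
        exact hmono.lt_iff_lt.mp this
  rw [← himg, integral_image_eq_integral_abs_deriv_smul measurableSet_Iio
      (fun x _ => (hderiv x).hasDerivWithinAt) (hmono.injective.injOn) g]
  refine setIntegral_congr_fun measurableSet_Iio fun x _ => ?_
  rw [smul_eq_mul, abs_of_pos (hpos x)]

lemma integrableOn_aux (a b c : ℝ) (ha : 0 < a) (hc : c < 1) :
    IntegrableOn (fun u : ℝ => u ^ (a - 1) * (1 - u) ^ (b - 1)) (Ioo 0 c) := by
  rcases le_or_gt c 0 with h | h
  · rw [Ioo_eq_empty (by simpa using h)]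
    exact integrableOn_empty
  · have hInt : IntegrableOn (fun u : ℝ => u ^ (a - 1)) (Ioc 0 c) := by
      have := intervalIntegral.intervalIntegrable_rpow' (a := 0) (b := c) (r := a - 1) (by linarith)
      rwa [intervalIntegrable_iff_integrableOn_Ioc_of_le h.le] at this
    have hIcc : IntegrableOn (fun u : ℝ => u ^ (a - 1)) (Icc 0 c) :=
      (integrableOn_Icc_iff_integrableOn_Ioc (by simp)).2 hInt
    have hcont : ContinuousOn (fun u : ℝ => (1 - u) ^ (b - 1)) (Icc 0 c) := by
      apply ContinuousOn.rpow_const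
      · exact (continuousOn_const.sub continuousOn_id)
      · intro x hx
        left
        have : x ≤ c := hx.2
        intro hzero
        linarith [sub_eq_zero.mp hzero]
    have hprod : IntegrableOn (fun u : ℝ => (1 - u) ^ (b - 1) * u ^ (a - 1)) (Icc 0 c) :=
      IntegrableOn.continuousOn_mul hcont hIcc isCompact_Icc
    exact ((hprod.mono_set Ioo_subset_Icc_self).congr_fun
      (fun x _ => mul_comm _ _) measurableSet_Ioo)

theorem additive_logistic_put_formula (α β ς μ : ℝ)
    (hα : 0 < α) (hβ : 0 < β) (hς : 0 < ς) (hςβ : ς < β)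
    (hmart : Real.exp μ = Beta α β / Beta (α + ς) (β - ς)) (κ : ℝ) :
    ∫ x : ℝ, max (Real.exp κ - Real.exp x) 0 * ((1 / ς) * logisticBetaPDF ((x - μ) / ς) α β)
      = Real.exp κ * logisticBetaCDF ((κ - μ) / ς) α β
        - logisticBetaCDF ((κ - μ) / ς) (α + ς) (β - ς) := by
  have hB : Beta α β ≠ 0 := by
    intro h; rw [h, zero_div] at hmart; exact Real.exp_ne_zero μ hmart
  have hB' : Beta (α + ς) (β - ς) ≠ 0 := by
    intro h; rw [h, div_zero] at hmart; exact Real.exp_ne_zero μ hmart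
  set uκ := logisticCDF ((κ - μ) / ς) with huκ
  have huκ0 : 0 < uκ := logisticCDF_pos _
  have huκ1 : uκ < 1 := logisticCDF_lt_one _
  -- the function on the u-side
  set g : ℝ → ℝ := fun u =>
    (Real.exp κ - Real.exp μ * (u / (1 - u)) ^ ς) * (u ^ (α - 1) * (1 - u) ^ (β - 1))
      / Beta α β with hg
  -- Step 1: rewrite LHS as indicator integral
  have hind : (fun x : ℝ => max (Real.exp κ - Real.exp x) 0
        * ((1 / ς) * logisticBetaPDF ((x - μ) / ς) α β))
      = Set.indicator (Iio κ)
          (fun x => ((1 / ς) * logisticPDF ((x - μ) / ς)) * g (logisticCDF ((x - μ) / ς))) := by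
    funext x
    by_cases hx : x < κ
    · rw [Set.indicator_of_mem (mem_Iio.2 hx)]
      have hmax : max (Real.exp κ - Real.exp x) 0 = Real.exp κ - Real.exp x :=
        max_eq_left (by linarith [Real.exp_lt_exp.2 hx])
      have hexp : Real.exp μ
          * (logisticCDF ((x - μ) / ς) / (1 - logisticCDF ((x - μ) / ς))) ^ ς = Real.exp x := by
        rw [logisticCDF_ratio, ← Real.exp_mul, ← Real.exp_add]
        congr 1
        field_simp
        ring
      rw [hg, hmax]
      simp only []
      rw [hexp, logisticBetaPDF]
      ring
    · rw [Set.indicator_of_notMem (by simpa using hx)]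
      have : Real.exp x ≤ Real.exp x := le_refl _
      have hmax : max (Real.exp κ - Real.exp x) 0 = 0 :=
        max_eq_right (by have := Real.exp_le_exp.2 (not_lt.1 hx); linarith)
      rw [hmax, zero_mul]
  rw [hind, integral_indicator measurableSet_Iio, ← logistic_change_var ς μ κ hς g]
  -- Step 2: evaluate the u-integral
  have hInt1 : IntegrableOn (fun u : ℝ => u ^ (α - 1) * (1 - u) ^ (β - 1)) (Ioo 0 uκ) :=
    integrableOn_aux α β uκ hα huκ1
  have hInt2 : IntegrableOn
      (fun u : ℝ => u ^ (α + ς - 1) * (1 - u) ^ (β - ς - 1)) (Ioo 0 uκ) :=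
    integrableOn_aux (α + ς) (β - ς) uκ (by linarith) huκ1
  have hcongr : ∫ u in Ioo 0 uκ, g u
      = ∫ u in Ioo 0 uκ, (Beta α β)⁻¹
          * (Real.exp κ * (u ^ (α - 1) * (1 - u) ^ (β - 1))
            - Real.exp μ * (u ^ (α + ς - 1) * (1 - u) ^ (β - ς - 1))) := by
    refine setIntegral_congr_fun measurableSet_Ioo fun u hu => ?_
    obtain ⟨hu0, huc⟩ := hu
    have hu1 : u < 1 := lt_trans huc huκ1
    have h1u : (0:ℝ) < 1 - u := by linarith
    have e0 : (u / (1 - u)) ^ ς = u ^ ς / (1 - u) ^ ς :=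
      Real.div_rpow hu0.le h1u.le ς
    have e1 : u ^ (α + ς - 1) = u ^ (α - 1) * u ^ ς := by
      rw [← Real.rpow_add hu0]; ring_nf
    have e2 : (1 - u) ^ (β - 1) = (1 - u) ^ (β - ς - 1) * (1 - u) ^ ς := by
      rw [← Real.rpow_add h1u]; ring_nf
    have hne : (1 - u) ^ ς ≠ 0 := (Real.rpow_pos_of_pos h1u ς).ne'
    rw [hg]
    simp only []
    rw [e0, e1, e2]
    field_simp
  rw [hcongr, integral_const_mul, integral_sub ((hInt1.const_mul _)) ((hInt2.const_mul _)),
    integral_const_mul, integral_const_mul]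
  -- Step 3: identify with the CDFs
  have hIoc1 : ∫ u in Ioo 0 uκ, u ^ (α - 1) * (1 - u) ^ (β - 1)
      = ∫ u in (0:ℝ)..uκ, u ^ (α - 1) * (1 - u) ^ (β - 1) := by
    rw [intervalIntegral.integral_of_le huκ0.le, integral_Ioc_eq_integral_Ioo]
  have hIoc2 : ∫ u in Ioo 0 uκ, u ^ (α + ς - 1) * (1 - u) ^ (β - ς - 1)
      = ∫ u in (0:ℝ)..uκ, u ^ (α + ς - 1) * (1 - u) ^ (β - ς - 1) := by
    rw [intervalIntegral.integral_of_le huκ0.le, integral_Ioc_eq_integral_Ioo]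
  rw [hIoc1, hIoc2, logisticBetaCDF, logisticBetaCDF, ← huκ, hmart]
  field_simp
end
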